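/- Orthogonal Procrustes optimal value: for matrices A, B : Matrix (Fin m) (Fin n) ℝ, the set {‖Q·B − A‖_F² : Q a real m × m matrix with Qᵀ·Q = 1} has least element ‖A‖_F² + ‖B‖_F² − 2·‖B·Aᵀ‖_*, where ‖·‖_F is the Frobenius norm and ‖·‖_* the nuclear norm; in particular the minimum is attained by some orthogonal Q. -/

import Mathlib

open Matrix
open scoped RealInnerProductSpace

/-- The spectral norm (largest singular value) of a real matrix: the `L2` operator norm
of the associated Euclidean linear map. -/
noncomputable def spectralNorm' {m n : ℕ} (A : Matrix (Fin m) (Fin n) ℝ) : ℝ :=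
  ‖LinearMap.toContinuousLinearMap (Matrix.toEuclideanLin A)‖

/-- The positive semidefinite square root of a positive semidefinite matrix
(the definition `Matrix.PosSemidef.sqrt` of the older Mathlib, since removed). -/
noncomputable def Matrix.PosSemidef.sqrt {n : Type*} [Fintype n] [DecidableEq n]
    {A : Matrix n n ℝ} (hA : A.PosSemidef) : Matrix n n ℝ :=
  hA.1.eigenvectorUnitary.1 * diagonal ((↑) ∘ (√·) ∘ hA.1.eigenvalues) *
  (star hA.1.eigenvectorUnitary : Matrix n n ℝ)

/-- The nuclear norm (sum of singular values) of a real matrix: the trace of the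
positive-semidefinite square root of `Aᴴ * A` (over `ℝ`, `Aᴴ = Aᵀ`). -/
noncomputable def nuclearNorm {m n : ℕ} (A : Matrix (Fin m) (Fin n) ℝ) : ℝ :=
  (Matrix.posSemidef_conjTranspose_mul_self A).sqrt.trace

/-- The Frobenius norm of a real matrix. -/
noncomputable def frobeniusNorm' {m n : ℕ} (C : Matrix (Fin m) (Fin n) ℝ) : ℝ :=
  Real.sqrt (∑ i, ∑ j, (C i j) ^ 2)

lemma Matrix.PosSemidef.sqrt_mul_self {n : Type*} [Fintype n] [DecidableEq n]
    {A : Matrix n n ℝ} (hA : A.PosSemidef) : hA.sqrt * hA.sqrt = A := by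
  have hU : star (hA.1.eigenvectorUnitary : Matrix n n ℝ) * hA.1.eigenvectorUnitary = 1 :=
    (Unitary.mem_iff.mp hA.1.eigenvectorUnitary.2).1
  conv_rhs => rw [hA.1.spectral_theorem]
  rw [Matrix.PosSemidef.sqrt]
  simp only [← mul_assoc]
  rw [mul_assoc _ (star _) (hA.1.eigenvectorUnitary : Matrix n n ℝ), hU, mul_one,
    mul_assoc _ (diagonal _) (diagonal _), diagonal_mul_diagonal]
  congr 3
  funext i
  simp only [Function.comp_apply]
  exact Real.mul_self_sqrt (hA.eigenvalues_nonneg i)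

lemma Matrix.PosSemidef.posSemidef_sqrt {n : Type*} [Fintype n] [DecidableEq n]
    {A : Matrix n n ℝ} (hA : A.PosSemidef) : hA.sqrt.PosSemidef := by
  rw [Matrix.PosSemidef.sqrt, Matrix.star_eq_conjTranspose]
  apply Matrix.PosSemidef.mul_mul_conjTranspose_same
  rw [Matrix.posSemidef_diagonal_iff]
  intro i
  simp only [Function.comp_apply]
  exact Real.sqrt_nonneg _

lemma frob_sq {m n : ℕ} (C : Matrix (Fin m) (Fin n) ℝ) :
    frobeniusNorm' C ^ 2 = Matrix.trace (Cᵀ * C) := by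
  rw [frobeniusNorm', Real.sq_sqrt (by positivity)]
  simp [Matrix.trace, Matrix.mul_apply, Matrix.diag, pow_two]
  exact Finset.sum_comm

lemma orth_entry_le_one {m : ℕ} {P : Matrix (Fin m) (Fin m) ℝ} (hP : Pᵀ * P = 1) (i : Fin m) :
    P i i ≤ 1 := by
  have h := congrFun (congrFun hP i) i
  simp [Matrix.mul_apply, Matrix.one_apply] at h
  have h2 : (P i i)^2 ≤ 1 := by
    rw [← h]
    have : ∀ j ∈ Finset.univ, (0:ℝ) ≤ P j i * P j i := fun j _ => mul_self_nonneg _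
    calc (P i i)^2 = P i i * P i i := sq (P i i) ▸ pow_two (P i i) ▸ rfl
    _ ≤ ∑ j, P j i * P j i := Finset.single_le_sum this (Finset.mem_univ i)
  nlinarith [sq_nonneg (P i i - 1)]

lemma trace_orth_mul_psd_le {m : ℕ} {R S : Matrix (Fin m) (Fin m) ℝ}
    (hR : Rᵀ * R = 1) (hS : S.PosSemidef) :
    Matrix.trace (R * S) ≤ Matrix.trace S := by
  have hH : S.IsHermitian := hS.1
  set V : Matrix (Fin m) (Fin m) ℝ := (hH.eigenvectorUnitary : Matrix (Fin m) (Fin m) ℝ)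
  have hVmem := hH.eigenvectorUnitary.2
  have hV1 : star V * V = 1 := (Unitary.mem_iff.mp hVmem).1
  have hV2 : V * star V = 1 := (Unitary.mem_iff.mp hVmem).2
  have hspec := hH.spectral_theorem
  set D : Matrix (Fin m) (Fin m) ℝ := Matrix.diagonal (RCLike.ofReal ∘ hH.eigenvalues) with hD
  set P : Matrix (Fin m) (Fin m) ℝ := star V * R * V with hPdef
  have hPorth : Pᵀ * P = 1 := by
    have hsR : star R = Rᵀ := by ext i j; simp [Matrix.conjTranspose_apply]
    have hstar : star P * P = 1 := by
      simp only [hPdef, StarMul.star_mul, star_star, mul_assoc]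
      rw [← mul_assoc V (star V) (R*V), hV2, one_mul, ← mul_assoc (star R) R V, hsR, hR,
        one_mul, hV1]
    simpa [Matrix.star_eq_conjTranspose, Matrix.conjTranspose_eq_transpose_of_trivial] using hstar
  have hspecV : S = V * D * star V := hH.spectral_theorem
  have htrS : Matrix.trace S = Matrix.trace D := by
    conv_lhs => rw [hspecV]
    rw [Matrix.trace_mul_cycle, hV1, one_mul]
  have htrRS : Matrix.trace (R * S) = Matrix.trace (P * D) := by
    conv_lhs => rw [hspecV]
    rw [show R * (V * D * star V) = (R * V * D) * star V by rw [← mul_assoc, ← mul_assoc],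
      Matrix.trace_mul_cycle, ← mul_assoc (star V) R V, ← hPdef]
  rw [htrS, htrRS, hD]
  simp only [Matrix.trace, Matrix.diag, Matrix.mul_diagonal, Matrix.diagonal_apply_eq,
    Function.comp_apply]
  apply Finset.sum_le_sum
  intro i _
  have h1 : P i i ≤ 1 := orth_entry_le_one hPorth i
  have h2 : (0:ℝ) ≤ (RCLike.ofReal (hH.eigenvalues i) : ℝ) := hS.eigenvalues_nonneg i
  nlinarith

lemma polar_decomp {m : ℕ} (M : Matrix (Fin m) (Fin m) ℝ) :
    ∃ W : Matrix (Fin m) (Fin m) ℝ, Wᵀ * W = 1 ∧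
      W * (Matrix.posSemidef_conjTranspose_mul_self M).sqrt = M := by
  set hPSD := Matrix.posSemidef_conjTranspose_mul_self M with hPSDdef
  set S : Matrix (Fin m) (Fin m) ℝ := hPSD.sqrt with hSdef
  have hSherm : S.IsHermitian := hPSD.posSemidef_sqrt.1
  have hSS : S * S = Mᴴ * M := hPSD.sqrt_mul_self
  have hCT : Mᴴ = Mᵀ := by ext i j; simp [Matrix.conjTranspose_apply]
  have hST : Sᵀ = S := by
    have h : Sᴴ = S := hSherm
    ext i j
    have h2 := congrFun (congrFun h i) j
    simpa [Matrix.conjTranspose_apply, Matrix.transpose_apply] using h2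
  -- dot product identity
  have hdot : ∀ x : Fin m → ℝ, (S *ᵥ x) ⬝ᵥ (S *ᵥ x) = (M *ᵥ x) ⬝ᵥ (M *ᵥ x) := by
    intro x
    rw [Matrix.dotProduct_mulVec, Matrix.dotProduct_mulVec, Matrix.vecMul_mulVec,
      Matrix.vecMul_mulVec, hST, hSS, hCT]
  -- Euclidean operators
  set Sop : EuclideanSpace ℝ (Fin m) →ₗ[ℝ] EuclideanSpace ℝ (Fin m) := Matrix.toEuclideanLin S with hSop
  set Top : EuclideanSpace ℝ (Fin m) →ₗ[ℝ] EuclideanSpace ℝ (Fin m) := Matrix.toEuclideanLin M with hTop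
  have hnorm : ∀ x : EuclideanSpace ℝ (Fin m), ‖Sop x‖ = ‖Top x‖ := by
    intro x
    have hin : (inner ℝ (Sop x) (Sop x) : ℝ) = (inner ℝ (Top x) (Top x) : ℝ) := by
      simp only [hSop, hTop, Matrix.toEuclideanLin_apply, PiLp.inner_apply,
        RCLike.inner_apply, conj_trivial]
      simpa [dotProduct] using hdot ((WithLp.equiv 2 (Fin m → ℝ)) x)
    have h1 := real_inner_self_eq_norm_sq (Sop x)
    have h2 := real_inner_self_eq_norm_sq (Top x)
    nlinarith [norm_nonneg (Sop x), norm_nonneg (Top x)]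
  have hker : LinearMap.ker Sop ≤ LinearMap.ker Top := by
    intro x hx
    rw [LinearMap.mem_ker] at hx ⊢
    have := hnorm x
    rw [hx, norm_zero] at this
    exact norm_eq_zero.mp this.symm
  set ψ : (EuclideanSpace ℝ (Fin m) ⧸ LinearMap.ker Sop) →ₗ[ℝ] EuclideanSpace ℝ (Fin m) := (LinearMap.ker Sop).liftQ Top hker with hψ
  set e := Sop.quotKerEquivRange with he
  set φ : LinearMap.range Sop →ₗ[ℝ] EuclideanSpace ℝ (Fin m) := ψ.comp (e.symm.toLinearMap) with hφdef
  have hφ : ∀ x : EuclideanSpace ℝ (Fin m), φ ⟨Sop x, LinearMap.mem_range_self _ x⟩ = Top x := by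
    intro x
    have h1 : e (Submodule.Quotient.mk x) = ⟨Sop x, LinearMap.mem_range_self _ x⟩ :=
      Subtype.ext (Sop.quotKerEquivRange_apply_mk x)
    have h2 : e.symm ⟨Sop x, LinearMap.mem_range_self _ x⟩ = Submodule.Quotient.mk x := by
      rw [← h1, LinearEquiv.symm_apply_apply]
    simp only [hφdef, LinearMap.comp_apply, LinearEquiv.coe_toLinearMap, h2, hψ,
      Submodule.liftQ_apply]
  have hiso : ∀ v : LinearMap.range Sop, ‖φ v‖ = ‖v‖ := by
    rintro ⟨v, hv⟩
    obtain ⟨x, rfl⟩ := hv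
    rw [hφ x]
    rw [← hnorm x]
    rfl
  set L : LinearMap.range Sop →ₗᵢ[ℝ] EuclideanSpace ℝ (Fin m) := ⟨φ, hiso⟩ with hL
  set W := L.extend with hW
  have hWS : ∀ x : EuclideanSpace ℝ (Fin m), W (Sop x) = Top x := by
    intro x
    have : W ((⟨Sop x, LinearMap.mem_range_self _ x⟩ : LinearMap.range Sop) : EuclideanSpace ℝ (Fin m))
        = L ⟨Sop x, LinearMap.mem_range_self _ x⟩ := L.extend_apply _
    simpa [hL, hφ x] using this
  -- the matrix of W
  set Q : Matrix (Fin m) (Fin m) ℝ := Matrix.toEuclideanLin.symm W.toLinearMap with hQdef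
  have hQ : Matrix.toEuclideanLin Q = W.toLinearMap := by
    rw [hQdef]; exact LinearEquiv.apply_symm_apply _ _
  have hQS : Q * S = M := by
    apply Matrix.toEuclideanLin.injective
    apply LinearMap.ext
    intro x
    have h1 : Matrix.toEuclideanLin (Q * S) x = (Matrix.toEuclideanLin Q) (Sop x) := by
      simp [hSop, Matrix.toEuclideanLin_apply, Matrix.mulVec_mulVec]
    rw [h1, hQ]
    exact hWS x
  have hQcol : ∀ (j i : Fin m), Q i j = W (EuclideanSpace.single j (1:ℝ)) i := by
    intro j i
    have h : Matrix.toEuclideanLin Q (EuclideanSpace.single j (1:ℝ))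
        = W (EuclideanSpace.single j (1:ℝ)) := by rw [hQ]; rfl
    have h2 : (Matrix.toEuclideanLin Q (EuclideanSpace.single j (1:ℝ))) i = Q i j := by
      simp [Matrix.toEuclideanLin_apply, Matrix.mulVec_single]
    rw [← h2, h]
  have horth : Qᵀ * Q = 1 := by
    ext j k
    have hinner := W.inner_map_map (EuclideanSpace.single j (1:ℝ))
      (EuclideanSpace.single k (1:ℝ))
    rw [PiLp.inner_apply] at hinner
    simp only [RCLike.inner_apply, conj_trivial] at hinner
    rw [EuclideanSpace.inner_single_left] at hinner
    simp only [conj_trivial, one_mul, EuclideanSpace.single_apply] at hinner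
    rw [Matrix.mul_apply, Matrix.one_apply]
    simp only [Matrix.transpose_apply]
    calc ∑ i, Q i j * Q i k
        = ∑ i, (W (EuclideanSpace.single j (1:ℝ)) i) * (W (EuclideanSpace.single k (1:ℝ)) i) := by
          apply Finset.sum_congr rfl; intro i _; rw [hQcol j i, hQcol k i]
      _ = if j = k then 1 else 0 := (Finset.sum_congr rfl fun i _ => mul_comm _ _).trans hinner
  exact ⟨Q, horth, hQS⟩

lemma trace_le_nuclearAux {m : ℕ} {Q : Matrix (Fin m) (Fin m) ℝ} (M : Matrix (Fin m) (Fin m) ℝ)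
    (hQ : Qᵀ * Q = 1) :
    Matrix.trace (Q * M) ≤ ((Matrix.posSemidef_conjTranspose_mul_self M).sqrt).trace := by
  obtain ⟨W, hW, hWM⟩ := polar_decomp M
  set S := (Matrix.posSemidef_conjTranspose_mul_self M).sqrt with hS
  have h1 : Q * M = (Q * W) * S := by rw [← hWM, mul_assoc]
  have h2 : (Q * W)ᵀ * (Q * W) = 1 := by
    rw [Matrix.transpose_mul, mul_assoc, ← mul_assoc Qᵀ, hQ, one_mul, hW]
  rw [h1]
  exact trace_orth_mul_psd_le h2 (Matrix.posSemidef_conjTranspose_mul_self M).posSemidef_sqrt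

lemma exists_trace_eq_nuclearAux {m : ℕ} (M : Matrix (Fin m) (Fin m) ℝ) :
    ∃ Q : Matrix (Fin m) (Fin m) ℝ, Qᵀ * Q = 1 ∧
      Matrix.trace (Q * M) = ((Matrix.posSemidef_conjTranspose_mul_self M).sqrt).trace := by
  obtain ⟨W, hW, hWM⟩ := polar_decomp M
  refine ⟨Wᵀ, ?_, ?_⟩
  · rw [Matrix.transpose_transpose]
    exact mul_eq_one_comm.mp hW
  · conv_lhs => rw [← hWM, ← mul_assoc, hW, one_mul]

/-- Orthogonal Procrustes optimal value. -/
theorem orthogonal_procrustes_optimal_value {m n : ℕ}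
    (A B : Matrix (Fin m) (Fin n) ℝ) :
    (∀ Q : Matrix (Fin m) (Fin m) ℝ, Qᵀ * Q = 1 →
      frobeniusNorm' A ^ 2 + frobeniusNorm' B ^ 2 - 2 * nuclearNorm (B * Aᵀ)
        ≤ frobeniusNorm' (Q * B - A) ^ 2) ∧
    (∃ Q : Matrix (Fin m) (Fin m) ℝ, Qᵀ * Q = 1 ∧
      frobeniusNorm' (Q * B - A) ^ 2
        = frobeniusNorm' A ^ 2 + frobeniusNorm' B ^ 2 - 2 * nuclearNorm (B * Aᵀ)) := by
  have hfrob : ∀ (C : Matrix (Fin m) (Fin n) ℝ),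
      frobeniusNorm' C ^ 2 = Matrix.trace (Cᵀ * C) := fun C => frob_sq C
  have hexpand : ∀ (Q : Matrix (Fin m) (Fin m) ℝ), Qᵀ * Q = 1 →
      frobeniusNorm' (Q * B - A) ^ 2 = frobeniusNorm' A ^ 2 + frobeniusNorm' B ^ 2
        - 2 * Matrix.trace (Q * (B * Aᵀ)) := by
    intro Q hQ
    rw [hfrob, hfrob, hfrob]
    set X := Q * B with hX
    have hXX : Matrix.trace (Xᵀ * X) = Matrix.trace (Bᵀ * B) := by
      rw [hX, Matrix.transpose_mul, Matrix.mul_assoc Bᵀ Qᵀ (Q * B),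
        ← Matrix.mul_assoc Qᵀ Q B, hQ, Matrix.one_mul]
    have hAX : Matrix.trace (Aᵀ * X) = Matrix.trace (Q * (B * Aᵀ)) := by
      rw [hX, Matrix.trace_mul_comm, Matrix.mul_assoc]
    have hXA : Matrix.trace (Xᵀ * A) = Matrix.trace (Q * (B * Aᵀ)) := by
      rw [← Matrix.trace_transpose (Xᵀ * A), Matrix.transpose_mul, Matrix.transpose_transpose,
        hAX]
    have hsplit : (X - A)ᵀ * (X - A) = (Xᵀ * X - Xᵀ * A) - (Aᵀ * X - Aᵀ * A) := by
      rw [Matrix.transpose_sub, Matrix.sub_mul, Matrix.mul_sub, Matrix.mul_sub]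
    rw [hsplit, Matrix.trace_sub, Matrix.trace_sub, Matrix.trace_sub, hXX, hAX, hXA]
    ring
  constructor
  · intro Q hQ
    rw [hexpand Q hQ]
    have h := trace_le_nuclearAux (B * Aᵀ) hQ
    have : Matrix.trace (Q * (B * Aᵀ)) ≤ nuclearNorm (B * Aᵀ) := h
    linarith
  · obtain ⟨Q, hQ, htr⟩ := exists_trace_eq_nuclearAux (B * Aᵀ)
    refine ⟨Q, hQ, ?_⟩
    rw [hexpand Q hQ]
    have : Matrix.trace (Q * (B * Aᵀ)) = nuclearNorm (B * Aᵀ) := htr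
    rw [this]
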